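/- For so(2m,C) with m ≥ 3, the Weyl dimension formula gives dim(F ⊠ Λ²F ⊠ S₊) = ((2m+1)(2m−1)(2m−3)·2^{m−1})/3, where the highest weight is (2+1/2, 1+1/2, 1/2, …, 1/2). -/

import Mathlib

/-- The lowest form `ρ = (m−1, m−2, …, 1, 0)` of `so(2m,ℂ)`. -/
noncomputable def rhoD (m : ℕ) : Fin m → ℚ := fun i => (m : ℚ) - 1 - (i : ℕ)

/-- The highest weight `(2+1/2, 1+1/2, 1/2, …, 1/2)` of `F ⊠ Λ²F ⊠ S₊` for `so(2m,ℂ)`. -/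
noncomputable def lamFL2D (m : ℕ) : Fin m → ℚ :=
  fun i => if (i : ℕ) = 0 then 2 + 1/2 else if (i : ℕ) = 1 then 1 + 1/2 else 1/2

/- Auxiliary ℕ-indexed versions. -/
noncomputable def lamN : ℕ → ℚ := fun j => if j = 0 then 2 + 1/2 else if j = 1 then 1 + 1/2 else 1/2
noncomputable def aN (m j : ℕ) : ℚ := lamN j + ((m : ℚ) - 1 - j)
noncomputable def bN (m j : ℕ) : ℚ := (m : ℚ) - 1 - j
noncomputable def wN (m i j : ℕ) : ℚ :=
  ((aN m i - aN m j) * (aN m i + aN m j)) / ((bN m i - bN m j) * (bN m i + bN m j))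

lemma lamN_ge2 {j : ℕ} (h : 2 ≤ j) : lamN j = 1/2 := by
  unfold lamN; rw [if_neg (by omega), if_neg (by omega)]

noncomputable def Pp (x : ℚ) (n : ℕ) : ℚ := ∏ k ∈ Finset.range n, (x + k)

lemma Pp_pos {x : ℚ} (hx : 0 < x) (n : ℕ) : 0 < Pp x n :=
  Finset.prod_pos fun k _ => by positivity

lemma Pp_add (x : ℚ) (n d : ℕ) : Pp x (n + d) = Pp x n * Pp (x + n) d := by
  rw [Pp, Pp, Pp, Finset.prod_range_add]
  congr 1
  refine Finset.prod_congr rfl fun k _ => ?_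
  push_cast; ring

lemma tele (x : ℚ) (hx : 0 < x) (d n : ℕ) :
    ∏ k ∈ Finset.range n, ((x + d + k) / (x + k)) = Pp (x + n) d / Pp x d := by
  have h1 : ∏ k ∈ Finset.range n, ((x + d + k) / (x + k)) = Pp (x + d) n / Pp x n := by
    rw [Finset.prod_div_distrib]; rfl
  have key : Pp x d * Pp (x + d) n = Pp x n * Pp (x + n) d := by
    rw [← Pp_add, ← Pp_add, add_comm]
  rw [h1, div_eq_div_iff (Pp_pos hx n).ne' (Pp_pos hx d).ne']
  linear_combination key

lemma Pp_one (x : ℚ) : Pp x 1 = x := by simp [Pp]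
lemma Pp_two (x : ℚ) : Pp x 2 = x * (x+1) := by
  simp [Pp, Finset.prod_range_succ]
lemma Pp_three (x : ℚ) : Pp x 3 = x * (x+1) * (x+2) := by
  simp [Pp, Finset.prod_range_succ]

lemma row0 (n : ℕ) :
    ∏ j ∈ Finset.Ico 1 (n+3), wN (n+3) 0 j
      = 2 * (2*(n:ℚ)+7) * (2*(n:ℚ)+5) / 3 := by
  rw [Finset.prod_Ico_eq_prod_range]
  have h2 : n + 3 - 1 = n + 1 + 1 := by omega
  rw [h2, Finset.prod_range_succ']
  have e1 : ∀ k ∈ Finset.range (n+1),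
      wN (n+3) 0 (1 + (k+1))
        = ((2 + ((2:ℕ):ℚ) + (k:ℚ))/(2 + (k:ℚ)))
          * ((2*(n:ℚ)+5 - (k:ℚ))/(2*(n:ℚ)+2 - (k:ℚ))) := by
    intro k hk
    rw [wN, aN, aN, bN, bN, show lamN 0 = 5/2 by norm_num [lamN],
      lamN_ge2 (by omega), div_mul_div_comm]
    congr 1 <;> push_cast <;> ring
  rw [Finset.prod_congr rfl e1, Finset.prod_mul_distrib,
    tele 2 (by norm_num) 2 (n+1), Pp_two, Pp_two]
  have e2 : ∏ k ∈ Finset.range (n+1), ((2*(n:ℚ)+5 - (k:ℚ))/(2*(n:ℚ)+2 - (k:ℚ)))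
      = (2*(n:ℚ)+3)*(2*(n:ℚ)+4)*(2*(n:ℚ)+5) / (((n:ℚ)+2)*((n:ℚ)+3)*((n:ℚ)+4)) := by
    rw [← Finset.prod_range_reflect
      (fun k : ℕ => ((2*(n:ℚ)+5 - (k:ℚ))/(2*(n:ℚ)+2 - (k:ℚ)))) (n+1)]
    have e3 : ∀ k ∈ Finset.range (n+1),
        (fun k : ℕ => ((2*(n:ℚ)+5 - (k:ℚ))/(2*(n:ℚ)+2 - (k:ℚ)))) (n+1-1-k)
          = ((n:ℚ)+2 + ((3:ℕ):ℚ) + (k:ℚ))/((n:ℚ)+2 + (k:ℚ)) := by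
      intro k hk
      simp only [Finset.mem_range] at hk
      have hc : ((n + 1 - 1 - k : ℕ) : ℚ) = (n:ℚ) - k := by
        have : n + 1 - 1 - k = n - k := by omega
        rw [this, Nat.cast_sub (by omega)]
      simp only
      rw [hc]
      congr 1 <;> push_cast <;> ring
    rw [Finset.prod_congr rfl e3, tele ((n:ℚ)+2) (by positivity) 3 (n+1), Pp_three, Pp_three]
    congr 1 <;> push_cast <;> ring
  rw [e2,
    show wN (n+3) 0 (1+0) = 2 * (2*(n:ℚ)+7) / (2*(n:ℚ)+3) by
      rw [wN, aN, aN, bN, bN, show lamN 0 = 5/2 by norm_num [lamN],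
        show lamN (1+0) = 3/2 by norm_num [lamN]]
      push_cast
      rw [div_eq_div_iff (by nlinarith [Nat.cast_nonneg (α := ℚ) n]) (by positivity)]
      ring]
  have h5 : (0:ℚ) < (n:ℚ) + 2 := by positivity
  have h6 : (0:ℚ) < 2*(n:ℚ)+3 := by positivity
  field_simp
  push_cast
  ring

lemma row1 (n : ℕ) :
    ∏ j ∈ Finset.Ico 2 (n+3), wN (n+3) 1 j = 2 * (2*(n:ℚ)+3) := by
  rw [Finset.prod_Ico_eq_prod_range]
  have h2 : n + 3 - 2 = n + 1 := by omega
  rw [h2]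
  have e1 : ∀ k ∈ Finset.range (n+1),
      wN (n+3) 1 (2 + k)
        = ((1 + ((1:ℕ):ℚ) + (k:ℚ))/(1 + (k:ℚ)))
          * ((2*(n:ℚ)+3 - (k:ℚ))/(2*(n:ℚ)+1 - (k:ℚ))) := by
    intro k hk
    rw [wN, aN, aN, bN, bN, show lamN 1 = 3/2 by norm_num [lamN],
      lamN_ge2 (by omega), div_mul_div_comm]
    congr 1 <;> push_cast <;> ring
  rw [Finset.prod_congr rfl e1, Finset.prod_mul_distrib,
    tele 1 (by norm_num) 1 (n+1), Pp_one, Pp_one]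
  have e2 : ∏ k ∈ Finset.range (n+1), ((2*(n:ℚ)+3 - (k:ℚ))/(2*(n:ℚ)+1 - (k:ℚ)))
      = (2*(n:ℚ)+2)*(2*(n:ℚ)+3) / (((n:ℚ)+1)*((n:ℚ)+2)) := by
    rw [← Finset.prod_range_reflect
      (fun k : ℕ => ((2*(n:ℚ)+3 - (k:ℚ))/(2*(n:ℚ)+1 - (k:ℚ)))) (n+1)]
    have e3 : ∀ k ∈ Finset.range (n+1),
        (fun k : ℕ => ((2*(n:ℚ)+3 - (k:ℚ))/(2*(n:ℚ)+1 - (k:ℚ)))) (n+1-1-k)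
          = ((n:ℚ)+1 + ((2:ℕ):ℚ) + (k:ℚ))/((n:ℚ)+1 + (k:ℚ)) := by
      intro k hk
      simp only [Finset.mem_range] at hk
      have hc : ((n + 1 - 1 - k : ℕ) : ℚ) = (n:ℚ) - k := by
        have : n + 1 - 1 - k = n - k := by omega
        rw [this, Nat.cast_sub (by omega)]
      simp only
      rw [hc]
      congr 1 <;> push_cast <;> ring
    rw [Finset.prod_congr rfl e3, tele ((n:ℚ)+1) (by positivity) 2 (n+1), Pp_two, Pp_two]
    congr 1 <;> push_cast <;> ring
  rw [e2]
  have h5 : (0:ℚ) < (n:ℚ) + 1 := by positivity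
  have h6 : (0:ℚ) < (n:ℚ) + 2 := by positivity
  field_simp
  push_cast
  ring

lemma rowMid (n i : ℕ) (h2 : 2 ≤ i) (hi : i ≤ n + 1) :
    ∏ j ∈ Finset.Ico (i+1) (n+3), wN (n+3) i j = 2 := by
  rw [Finset.prod_Ico_eq_prod_range]
  set p : ℕ := n + 3 - (i + 1) with hp
  have hp1 : 1 ≤ p := by omega
  have hpc : (p : ℚ) = (n:ℚ) + 2 - i := by
    rw [hp, Nat.cast_sub (by omega : i + 1 ≤ n + 3)]; push_cast; ring
  have hx : (0:ℚ) < (n:ℚ) + 2 - i := by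
    have : (i:ℚ) ≤ (n:ℚ) + 1 := by exact_mod_cast hi
    linarith
  have e1 : ∀ k ∈ Finset.range p,
      wN (n+3) i (i + 1 + k)
        = (2*(n:ℚ)+4-2*(i:ℚ)-(k:ℚ))/(2*(n:ℚ)+3-2*(i:ℚ)-(k:ℚ)) := by
    intro k hk
    have hne : (1:ℚ) + (k:ℚ) ≠ 0 := by positivity
    have : wN (n+3) i (i + 1 + k)
        = ((1+(k:ℚ)) * (2*(n:ℚ)+4-2*(i:ℚ)-(k:ℚ)))
          / ((1+(k:ℚ)) * (2*(n:ℚ)+3-2*(i:ℚ)-(k:ℚ))) := by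
      rw [wN, aN, aN, bN, bN, lamN_ge2 h2, lamN_ge2 (by omega)]
      congr 1 <;> push_cast <;> ring
    rw [this, mul_div_mul_left _ _ hne]
  rw [Finset.prod_congr rfl e1]
  rw [← Finset.prod_range_reflect
    (fun k : ℕ => (2*(n:ℚ)+4-2*(i:ℚ)-(k:ℚ))/(2*(n:ℚ)+3-2*(i:ℚ)-(k:ℚ))) p]
  have e3 : ∀ k ∈ Finset.range p,
      (fun k : ℕ => (2*(n:ℚ)+4-2*(i:ℚ)-(k:ℚ))/(2*(n:ℚ)+3-2*(i:ℚ)-(k:ℚ))) (p-1-k)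
        = ((n:ℚ)+2-(i:ℚ) + ((1:ℕ):ℚ) + (k:ℚ))/((n:ℚ)+2-(i:ℚ) + (k:ℚ)) := by
    intro k hk
    simp only [Finset.mem_range] at hk
    have hc : ((p - 1 - k : ℕ) : ℚ) = (p:ℚ) - 1 - k := by
      rw [show p - 1 - k = p - (1 + k) by omega, Nat.cast_sub (by omega)]
      push_cast; ring
    simp only
    rw [hc, hpc]
    congr 1 <;> ring
  rw [Finset.prod_congr rfl e3, tele ((n:ℚ)+2-(i:ℚ)) hx 1 p, Pp_one, Pp_one, hpc]
  field_simp
  ring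

lemma key (n : ℕ) :
    (∏ i : Fin (n+3), ∏ j ∈ Finset.Ioi i,
        ((lamFL2D (n+3) i + rhoD (n+3) i) - (lamFL2D (n+3) j + rhoD (n+3) j))
          * ((lamFL2D (n+3) i + rhoD (n+3) i) + (lamFL2D (n+3) j + rhoD (n+3) j)))
      / (∏ i : Fin (n+3), ∏ j ∈ Finset.Ioi i,
          (rhoD (n+3) i - rhoD (n+3) j) * (rhoD (n+3) i + rhoD (n+3) j))
      = (2 * ((n+3 : ℕ) : ℚ) + 1) * (2 * ((n+3 : ℕ) : ℚ) - 1) * (2 * ((n+3 : ℕ) : ℚ) - 3)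
          * (2 : ℚ) ^ (n + 3 - 1) / 3 := by
  have conv : (∏ i : Fin (n+3), ∏ j ∈ Finset.Ioi i,
        ((lamFL2D (n+3) i + rhoD (n+3) i) - (lamFL2D (n+3) j + rhoD (n+3) j))
          * ((lamFL2D (n+3) i + rhoD (n+3) i) + (lamFL2D (n+3) j + rhoD (n+3) j)))
      / (∏ i : Fin (n+3), ∏ j ∈ Finset.Ioi i,
          (rhoD (n+3) i - rhoD (n+3) j) * (rhoD (n+3) i + rhoD (n+3) j))
      = ∏ i ∈ Finset.range (n+3), ∏ j ∈ Finset.Ico (i+1) (n+3), wN (n+3) i j := by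
    rw [← Finset.prod_div_distrib]
    rw [show (∏ i : Fin (n+3), (∏ j ∈ Finset.Ioi i,
          ((lamFL2D (n+3) i + rhoD (n+3) i) - (lamFL2D (n+3) j + rhoD (n+3) j))
            * ((lamFL2D (n+3) i + rhoD (n+3) i) + (lamFL2D (n+3) j + rhoD (n+3) j)))
          / (∏ j ∈ Finset.Ioi i, (rhoD (n+3) i - rhoD (n+3) j) * (rhoD (n+3) i + rhoD (n+3) j)))
        = ∏ i : Fin (n+3), ∏ j ∈ Finset.Ioi i, wN (n+3) i j from
      Finset.prod_congr rfl fun i _ => (Finset.prod_div_distrib _ _).symm]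
    rw [← Fin.prod_univ_eq_prod_range (fun i => ∏ j ∈ Finset.Ico (i+1) (n+3), wN (n+3) i j)]
    refine Finset.prod_congr rfl fun i _ => ?_
    have h1 : ∏ j ∈ Finset.Ioi i, wN (n+3) (i : ℕ) (j : ℕ)
        = ∏ j ∈ (Finset.Ioi i).map Fin.valEmbedding, wN (n+3) (i : ℕ) j := by
      rw [Finset.prod_map]; rfl
    rw [h1, Fin.map_valEmbedding_Ioi]
    congr 1
  rw [conv, Finset.prod_range_succ, Finset.prod_range_succ', Finset.prod_range_succ']
  have hlast : ∏ j ∈ Finset.Ico (n+2+1) (n+3), wN (n+3) (n+2) j = 1 := by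
    rw [show n+2+1 = n+3 from rfl, Finset.Ico_self, Finset.prod_empty]
  have hmid : ∏ k ∈ Finset.range n,
      ∏ j ∈ Finset.Ico (k+1+1+1) (n+3), wN (n+3) (k+1+1) j = 2 ^ n := by
    have h9 : ∀ k ∈ Finset.range n,
        ∏ j ∈ Finset.Ico (k+1+1+1) (n+3), wN (n+3) (k+1+1) j = 2 := by
      intro k hk
      simp only [Finset.mem_range] at hk
      exact rowMid n (k+1+1) (by omega) (by omega)
    rw [Finset.prod_congr rfl h9, Finset.prod_const, Finset.card_range]
  rw [hlast, hmid, show (0:ℕ)+1+1 = 2 from rfl, show (0:ℕ)+1 = 1 from rfl,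
    row1 n, row0 n]
  push_cast
  ring

theorem weyl_dim_F_L2F_spin_even (m : ℕ) (hm : 3 ≤ m) :
    (∏ i : Fin m, ∏ j ∈ Finset.Ioi i,
        ((lamFL2D m i + rhoD m i) - (lamFL2D m j + rhoD m j))
          * ((lamFL2D m i + rhoD m i) + (lamFL2D m j + rhoD m j)))
      / (∏ i : Fin m, ∏ j ∈ Finset.Ioi i, (rhoD m i - rhoD m j) * (rhoD m i + rhoD m j))
      = (2 * (m : ℚ) + 1) * (2 * (m : ℚ) - 1) * (2 * (m : ℚ) - 3) * (2 : ℚ) ^ (m - 1) / 3 := by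
  obtain ⟨n, rfl⟩ : ∃ n, m = n + 3 := ⟨m - 3, by omega⟩
  exact key n
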